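/- There exists a sequence Δ_1, Δ_2, ... ≥ 0 with ∑_{q=1}^∞ q Δ_q = ∞ such that the set A = {x ∈ [0,1] : |x - a/q| < Δ_q for infinitely many (a,q) ∈ ℤ × ℕ} has Lebesgue measure zero. -/

import Mathlib

open MeasureTheory Filter

namespace DSAux

/-- `NN j = (2^j)!` -/
def NN (j : ℕ) : ℕ := (2 ^ j).factorial

lemma NN_pos (j : ℕ) : 0 < NN j := Nat.factorial_pos _

lemma NN_dvd {i j : ℕ} (h : i ≤ j) : NN i ∣ NN j :=
  Nat.factorial_dvd_factorial (Nat.pow_le_pow_right (by norm_num) h)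

lemma exists_dvd (q : ℕ) (hq : 1 ≤ q) : ∃ j, q ∣ NN j :=
  ⟨q, Nat.dvd_factorial hq (Nat.lt_two_pow_self (n := q)).le⟩

/-- minimal `j` with `q ∣ (2^j)!` -/
noncomputable def J (q : ℕ) : ℕ := if h : 1 ≤ q then Nat.find (exists_dvd q h) else 0

noncomputable def cc (j : ℕ) : ℝ := 1 / ((j : ℝ) + 1) ^ 2

lemma cc_pos (j : ℕ) : 0 < cc j := by
  have : (0:ℝ) ≤ (j:ℝ) := Nat.cast_nonneg j
  rw [cc]; positivity

lemma cc_le_one (j : ℕ) : cc j ≤ 1 := by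
  have hj : (0:ℝ) ≤ (j:ℝ) := Nat.cast_nonneg j
  have h : (1:ℝ) ≤ ((j:ℝ) + 1) ^ 2 := by nlinarith
  rw [cc, div_le_one (by nlinarith)]
  exact h

noncomputable def Δ (q : ℕ) : ℝ := if 1 ≤ q then cc (J q) / (NN (J q) : ℝ) else 0

lemma Δ_nonneg (q : ℕ) : 0 ≤ Δ q := by
  rw [Δ]; split
  · exact div_nonneg (cc_pos _).le (Nat.cast_nonneg _)
  · rfl

lemma J_dvd {q : ℕ} (hq : 1 ≤ q) : q ∣ NN (J q) := by
  rw [J, dif_pos hq]; exact Nat.find_spec (exists_dvd q hq)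

lemma J_le {q j : ℕ} (hq : 1 ≤ q) (h : q ∣ NN j) : J q ≤ j := by
  rw [J, dif_pos hq]; exact Nat.find_le h

lemma J_gt {q j0 : ℕ} (h : NN j0 < q) : j0 < J q := by
  have hq : 1 ≤ q := (NN_pos j0).trans h
  by_contra hle
  push_neg at hle
  have : q ∣ NN j0 := (J_dvd hq).trans (NN_dvd hle)
  exact absurd (Nat.le_of_dvd (NN_pos j0) this) (not_le.2 h)

lemma k_dvd_NN {j k : ℕ} (hk1 : 1 ≤ k) (hk : k ≤ 2 ^ j) : k ∣ NN (j + 1) :=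
  Nat.dvd_factorial hk1 (hk.trans (Nat.pow_le_pow_right (by norm_num) (Nat.le_succ j)))

lemma block_gt {j k : ℕ} (hk1 : 1 ≤ k) (hk : k ≤ 2 ^ j) : NN j < NN (j + 1) / k := by
  have h2 : (2 : ℕ) ^ j ∣ NN (j + 1) := k_dvd_NN Nat.one_le_two_pow le_rfl
  have hmul : 2 ^ j * NN j < NN (j + 1) := by
    have h1 : 2 ^ j * NN j < (2 ^ j + 1) * NN j := by
      have := NN_pos j; nlinarith
    have heq : (2 ^ j + 1) * NN j = (2 ^ j + 1).factorial := (Nat.factorial_succ (2 ^ j)).symm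
    have h2' : (2 ^ j + 1).factorial ≤ NN (j + 1) := by
      apply Nat.factorial_le
      have : 2 ^ (j + 1) = 2 ^ j + 2 ^ j := by ring
      have h3 : 1 ≤ 2 ^ j := Nat.one_le_two_pow
      omega
    omega
  have h3 : NN j < NN (j + 1) / 2 ^ j := (Nat.lt_div_iff_mul_lt' h2 _).mpr hmul
  exact lt_of_lt_of_le h3 (Nat.div_le_div_left hk (by positivity))

lemma block_J {j k : ℕ} (hk1 : 1 ≤ k) (hk : k ≤ 2 ^ j) : J (NN (j + 1) / k) = j + 1 := by
  have hgt := block_gt hk1 hk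
  have hq1 : 1 ≤ NN (j + 1) / k := (NN_pos j).trans hgt
  have hdvd : NN (j + 1) / k ∣ NN (j + 1) := Nat.div_dvd_of_dvd (k_dvd_NN hk1 hk)
  exact le_antisymm (J_le hq1 hdvd) (J_gt hgt)

lemma block_val {j k : ℕ} (hk1 : 1 ≤ k) (hk : k ≤ 2 ^ j) :
    ((NN (j + 1) / k : ℕ) : ℝ) * Δ (NN (j + 1) / k) = cc (j + 1) / (k : ℝ) := by
  have hgt := block_gt hk1 hk
  have hq1 : 1 ≤ NN (j + 1) / k := (NN_pos j).trans hgt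
  have hdvd : k ∣ NN (j + 1) := k_dvd_NN hk1 hk
  have hk0 : (k : ℝ) ≠ 0 := by exact_mod_cast Nat.one_le_iff_ne_zero.1 hk1
  have hcast : ((NN (j + 1) / k : ℕ) : ℝ) = (NN (j + 1) : ℝ) / (k : ℝ) :=
    Nat.cast_div hdvd hk0
  rw [Δ, if_pos hq1, block_J hk1 hk, hcast]
  have hN : (NN (j + 1) : ℝ) ≠ 0 := by exact_mod_cast (NN_pos (j + 1)).ne'
  field_simp

lemma harmonic_lb (j : ℕ) :
    1 + (j : ℝ) / 2 ≤ ∑ k ∈ Finset.Ioc (0 : ℕ) (2 ^ j), (1 : ℝ) / (k : ℝ) := by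
  induction j with
  | zero => norm_num [show Finset.Ioc (0:ℕ) 1 = {1} from rfl]
  | succ j ih =>
    have hsplit : ∑ k ∈ Finset.Ioc (0:ℕ) (2 ^ j), (1 : ℝ) / (k : ℝ)
        + ∑ k ∈ Finset.Ioc ((2:ℕ) ^ j) (2 ^ (j + 1)), (1 : ℝ) / (k : ℝ)
        = ∑ k ∈ Finset.Ioc (0:ℕ) (2 ^ (j + 1)), (1 : ℝ) / (k : ℝ) :=
      Finset.sum_Ioc_consecutive _ (Nat.zero_le (2 ^ j))
        (Nat.pow_le_pow_right (by norm_num) (Nat.le_succ j))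
    have hlow : (1 : ℝ) / 2 ≤ ∑ k ∈ Finset.Ioc ((2:ℕ) ^ j) (2 ^ (j + 1)), (1 : ℝ) / (k : ℝ) := by
      have hcard : (Finset.Ioc ((2:ℕ) ^ j) (2 ^ (j + 1))).card = 2 ^ j := by
        rw [Nat.card_Ioc]; rw [pow_succ]; omega
      have hbound : ∀ k ∈ Finset.Ioc ((2:ℕ) ^ j) (2 ^ (j + 1)),
          (1 : ℝ) / (2 : ℝ) ^ (j + 1) ≤ 1 / (k : ℝ) := by
        intro k hk
        rw [Finset.mem_Ioc] at hk
        have h0 : 0 < k := lt_of_le_of_lt (Nat.zero_le _) hk.1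
        apply div_le_div_of_nonneg_left one_pos.le (by exact_mod_cast h0)
        exact_mod_cast hk.2
      calc (1 : ℝ) / 2 = (2 ^ j : ℕ) • ((1 : ℝ) / (2 : ℝ) ^ (j + 1)) := by
            rw [nsmul_eq_mul]; push_cast; rw [pow_succ]; field_simp
        _ = (Finset.Ioc ((2:ℕ) ^ j) (2 ^ (j + 1))).card • ((1 : ℝ) / (2:ℝ) ^ (j + 1)) := by
            rw [hcard]
        _ ≤ _ := Finset.card_nsmul_le_sum _ _ _ hbound
    rw [← hsplit]
    push_cast
    push_cast at ih
    linarith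

theorem not_summable_f : ¬ Summable (fun q : ℕ => (q : ℝ) * Δ q) := by
  intro hsum
  set f : ℕ → ℝ := fun q => (q : ℝ) * Δ q with hf
  have hf0 : ∀ q, 0 ≤ f q := fun q => mul_nonneg (Nat.cast_nonneg q) (Δ_nonneg q)
  set T := ∑' q, f q with hT
  have key : ∀ M : ℕ, ∑ j ∈ Finset.range M, (1 : ℝ) / 4 * (1 / ((j : ℝ) + 1)) ≤ T := by
    intro M
    set B : ℕ → Finset ℕ := fun j => (Finset.Icc 1 (2 ^ j)).image (fun k => NN (j + 1) / k)
      with hB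
    have hmemJ : ∀ j q, q ∈ B j → J q = j + 1 := by
      intro j q hq
      rw [hB, Finset.mem_image] at hq
      obtain ⟨k, hk, rfl⟩ := hq
      rw [Finset.mem_Icc] at hk
      exact block_J hk.1 hk.2
    have hdisj : (Finset.range M : Set ℕ).PairwiseDisjoint B := by
      intro i _ j _ hij
      simp only [Function.onFun]
      rw [Finset.disjoint_left]
      intro q hqi hqj
      exact hij (by have := hmemJ i q hqi; have := hmemJ j q hqj; omega)
    have hsum_biUnion : ∑ q ∈ (Finset.range M).biUnion B, f q
        = ∑ j ∈ Finset.range M, ∑ q ∈ B j, f q := Finset.sum_biUnion hdisj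
    have hblock : ∀ j : ℕ, (1 : ℝ) / 4 * (1 / ((j : ℝ) + 1)) ≤ ∑ q ∈ B j, f q := by
      intro j
      have hinj : ∀ k ∈ Finset.Icc 1 (2 ^ j), ∀ k' ∈ Finset.Icc 1 (2 ^ j),
          NN (j + 1) / k = NN (j + 1) / k' → k = k' := by
        intro k hk k' hk' hkk'
        rw [Finset.mem_Icc] at hk hk'
        have h1 : k ∣ NN (j + 1) := k_dvd_NN hk.1 hk.2
        have h2 : k' ∣ NN (j + 1) := k_dvd_NN hk'.1 hk'.2
        have e1 : NN (j + 1) / (NN (j + 1) / k) = k :=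
          Nat.div_div_self h1 (NN_pos (j + 1)).ne'
        have e2 : NN (j + 1) / (NN (j + 1) / k') = k' :=
          Nat.div_div_self h2 (NN_pos (j + 1)).ne'
        rw [← e1, ← e2, hkk']
      have himg : ∑ q ∈ B j, f q = ∑ k ∈ Finset.Icc 1 (2 ^ j), f (NN (j + 1) / k) :=
        Finset.sum_image hinj
      have hval : ∑ k ∈ Finset.Icc 1 (2 ^ j), f (NN (j + 1) / k)
          = cc (j + 1) * ∑ k ∈ Finset.Icc (1:ℕ) (2 ^ j), (1 : ℝ) / (k : ℝ) := by
        rw [Finset.mul_sum]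
        apply Finset.sum_congr rfl
        intro k hk
        rw [Finset.mem_Icc] at hk
        rw [hf]
        simp only
        rw [block_val hk.1 hk.2]
        ring
      have hIcc : Finset.Icc (1:ℕ) (2 ^ j) = Finset.Ioc (0:ℕ) (2 ^ j) :=
        Finset.Icc_add_one_left_eq_Ioc 0 (2 ^ j)
      have hhar : 1 + (j : ℝ) / 2 ≤ ∑ k ∈ Finset.Icc (1:ℕ) (2 ^ j), (1 : ℝ) / (k : ℝ) := by
        rw [hIcc]; exact harmonic_lb j
      have hfinal : (1 : ℝ) / 4 * (1 / ((j : ℝ) + 1)) ≤ cc (j + 1) * (1 + (j : ℝ) / 2) := by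
        have hj : (0 : ℝ) ≤ (j : ℝ) := Nat.cast_nonneg j
        have e1 : (1:ℝ) / 4 * (1 / ((j : ℝ) + 1)) = 1 / (4 * ((j:ℝ) + 1)) :=
          one_div_mul_one_div 4 ((j:ℝ) + 1)
        have e2 : cc (j + 1) * (1 + (j : ℝ) / 2) = (1 + (j:ℝ)/2) / ((j:ℝ) + 2) ^ 2 := by
          rw [cc]; push_cast; ring
        rw [e1, e2, div_le_div_iff₀ (by nlinarith) (by nlinarith)]
        nlinarith
      calc (1 : ℝ) / 4 * (1 / ((j : ℝ) + 1)) ≤ cc (j + 1) * (1 + (j : ℝ) / 2) := hfinal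
        _ ≤ cc (j + 1) * ∑ k ∈ Finset.Icc (1:ℕ) (2 ^ j), (1 : ℝ) / (k : ℝ) :=
            mul_le_mul_of_nonneg_left hhar (cc_pos _).le
        _ = ∑ q ∈ B j, f q := by rw [himg, hval]
    calc ∑ j ∈ Finset.range M, (1 : ℝ) / 4 * (1 / ((j : ℝ) + 1))
        ≤ ∑ j ∈ Finset.range M, ∑ q ∈ B j, f q := Finset.sum_le_sum fun j _ => hblock j
      _ = ∑ q ∈ (Finset.range M).biUnion B, f q := hsum_biUnion.symm
      _ ≤ T := Summable.sum_le_tsum _ (fun q _ => hf0 q) hsum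
  have hdiv := Real.tendsto_sum_range_one_div_nat_succ_atTop
  obtain ⟨M, hM⟩ := (hdiv.eventually_ge_atTop (4 * T + 4)).exists
  have h1 := key M
  have h2 : ∑ j ∈ Finset.range M, (1 : ℝ) / 4 * (1 / ((j : ℝ) + 1))
      = (1 : ℝ) / 4 * ∑ i ∈ Finset.range M, (1 / ((i : ℝ) + 1)) := by
    rw [Finset.mul_sum]
  rw [h2] at h1
  linarith

/-- The bad set at scale `j`. -/
def G (j : ℕ) : Set ℝ :=
  ⋃ b ∈ Finset.range (NN j + 1), Metric.ball ((b : ℝ) / (NN j : ℝ)) (cc j / (NN j : ℝ))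

lemma volume_G_le (j : ℕ) : volume (G j) ≤ ENNReal.ofReal (4 * cc j) := by
  have hN : (0 : ℝ) < (NN j : ℝ) := by exact_mod_cast NN_pos j
  have hc := (cc_pos j).le
  calc volume (G j)
      ≤ ∑ b ∈ Finset.range (NN j + 1), volume (Metric.ball ((b : ℝ) / (NN j : ℝ))
          (cc j / (NN j : ℝ))) := measure_biUnion_finset_le _ _
    _ = ENNReal.ofReal (((NN j + 1 : ℕ) : ℝ) * (2 * (cc j / (NN j : ℝ)))) := by
        simp only [Real.volume_ball]
        rw [Finset.sum_const, Finset.card_range, nsmul_eq_mul, ← ENNReal.ofReal_natCast,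
          ← ENNReal.ofReal_mul (by positivity)]
    _ ≤ ENNReal.ofReal (4 * cc j) := by
        apply ENNReal.ofReal_le_ofReal
        have h1 : ((NN j + 1 : ℕ) : ℝ) ≤ 2 * (NN j : ℝ) := by
          push_cast
          have : (1 : ℝ) ≤ (NN j : ℝ) := by exact_mod_cast NN_pos j
          linarith
        calc ((NN j + 1 : ℕ) : ℝ) * (2 * (cc j / (NN j : ℝ)))
            ≤ 2 * (NN j : ℝ) * (2 * (cc j / (NN j : ℝ))) := by
              apply mul_le_mul_of_nonneg_right h1 (by positivity)
          _ = 4 * cc j := by field_simp; ring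

lemma sum_volume_G_ne_top : ∑' j, volume (G j) ≠ ⊤ := by
  have hsummable : Summable (fun j : ℕ => 4 * cc j) := by
    have h1 : Summable (fun n : ℕ => 1 / (n : ℝ) ^ 2) :=
      Real.summable_one_div_nat_pow.mpr (by norm_num)
    have h2 : Summable (fun n : ℕ => 1 / ((n + 1 : ℕ) : ℝ) ^ 2) :=
      (summable_nat_add_iff (f := fun n : ℕ => 1 / (n : ℝ) ^ 2) 1).mpr h1
    have h3 : Summable cc := by
      apply h2.congr
      intro n
      show 1 / ((n + 1 : ℕ) : ℝ) ^ 2 = cc n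
      rw [cc]
      push_cast
      ring
    exact h3.mul_left 4
  have hle : ∑' j, volume (G j) ≤ ∑' j, ENNReal.ofReal (4 * cc j) :=
    ENNReal.tsum_le_tsum volume_G_le
  have heq : ∑' j, ENNReal.ofReal (4 * cc j) = ENNReal.ofReal (∑' j, 4 * cc j) :=
    (ENNReal.ofReal_tsum_of_nonneg (fun j => by have := (cc_pos j).le; positivity)
      hsummable).symm
  rw [heq] at hle
  exact ne_top_of_le_ne_top ENNReal.ofReal_ne_top hle

end DSAux

open DSAux in
theorem duffin_schaeffer_counterexample :
    ∃ Δ : ℕ → ℝ, (∀ q, 0 ≤ Δ q) ∧ ¬ Summable (fun q : ℕ => (q : ℝ) * Δ q) ∧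
      volume {x ∈ Set.Icc (0 : ℝ) 1 |
        ∀ Q : ℕ, ∃ (a : ℤ) (q : ℕ), Q < q ∧ |x - a / q| < Δ q} = 0 := by
  refine ⟨DSAux.Δ, DSAux.Δ_nonneg, DSAux.not_summable_f, ?_⟩
  apply measure_mono_null (t := limsup G atTop) ?_
    (measure_limsup_atTop_eq_zero sum_volume_G_ne_top)
  rintro x ⟨hx01, hP⟩
  rw [mem_limsup_iff_frequently_mem, frequently_atTop]
  intro J0
  obtain ⟨a, q, hq, hlt⟩ := hP (NN J0)
  have hq1 : 1 ≤ q := (NN_pos J0).trans hq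
  have hjJ : J0 < J q := J_gt hq
  refine ⟨J q, hjJ.le, ?_⟩
  set j := J q with hj
  have hΔ : DSAux.Δ q = cc j / (NN j : ℝ) := if_pos hq1
  have hdvd : q ∣ NN j := J_dvd hq1
  have hN : (0 : ℝ) < (NN j : ℝ) := by exact_mod_cast NN_pos j
  have hq0 : (q : ℝ) ≠ 0 := by exact_mod_cast Nat.one_le_iff_ne_zero.1 hq1
  set b' : ℤ := a * (NN j / q : ℕ) with hb'
  have hmcast : ((NN j / q : ℕ) : ℝ) = (NN j : ℝ) / (q : ℝ) := Nat.cast_div hdvd hq0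
  have hfrac : (a : ℝ) / (q : ℝ) = (b' : ℝ) / (NN j : ℝ) := by
    rw [hb', Int.cast_mul, Int.cast_natCast, hmcast]
    field_simp
  rw [hΔ, hfrac] at hlt
  have hcle : cc j / (NN j : ℝ) ≤ 1 / (NN j : ℝ) :=
    div_le_div_of_nonneg_right (cc_le_one j) hN.le
  obtain ⟨hx0, hx1⟩ := hx01
  have habs := abs_lt.mp hlt
  have hb'0 : 0 ≤ b' := by
    by_contra hneg
    push_neg at hneg
    have hle1 : b' ≤ -1 := by omega
    have hle1' : (b' : ℝ) ≤ -1 := by exact_mod_cast hle1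
    have h1 : (b' : ℝ) / (NN j : ℝ) ≤ -1 / (NN j : ℝ) :=
      div_le_div_of_nonneg_right hle1' hN.le
    have h2 : x - (b' : ℝ) / (NN j : ℝ) < cc j / (NN j : ℝ) := habs.2
    have h5 : (-1 : ℝ) / (NN j : ℝ) = -(1 / (NN j : ℝ)) := by ring
    linarith
  have hb'le : b' ≤ (NN j : ℤ) := by
    by_contra hgt
    push_neg at hgt
    have hge1 : (NN j : ℤ) + 1 ≤ b' := by omega
    have hge1' : ((NN j : ℝ) + 1) ≤ (b' : ℝ) := by exact_mod_cast hge1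
    have h1 : ((NN j : ℝ) + 1) / (NN j : ℝ) ≤ (b' : ℝ) / (NN j : ℝ) :=
      div_le_div_of_nonneg_right hge1' hN.le
    have h2 : -(cc j / (NN j : ℝ)) < x - (b' : ℝ) / (NN j : ℝ) := habs.1
    have h4 : ((NN j : ℝ) + 1) / (NN j : ℝ) = 1 + 1 / (NN j : ℝ) := by field_simp
    linarith
  have hmem : b'.toNat ∈ Finset.range (NN j + 1) := Finset.mem_range.mpr (by omega)
  have hball : x ∈ Metric.ball (((b'.toNat : ℕ) : ℝ) / (NN j : ℝ)) (cc j / (NN j : ℝ)) := by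
    rw [Metric.mem_ball, Real.dist_eq]
    have hcast : ((b'.toNat : ℕ) : ℝ) = (b' : ℝ) := by exact_mod_cast Int.toNat_of_nonneg hb'0
    rw [hcast]
    exact hlt
  exact Set.mem_biUnion hmem hball
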